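/- arXiv:2102.04302 — 2 statements merged into one kernel-verified Lean document; each statement's English description precedes it below -/
import Mathlib

section
/- Let $p \ge 2$ be an integer and $a_1,\ldots,a_p : \mathbb T \to \mathbb R$ be continuous nonnegative functions. Define sequences $a_i^{(0)} = a_i$ and $a_i^{(k+1)} = \bigl(\prod_{j \ne i} a_j^{(k)}\bigr)^{1/(p-1)}$ for $i = 1,\ldots,p$. Then for every $k \ge 0$, $a_i^{(k)} = a_i^{n_{k-1}} \prod_{j \ne i} a_j^{n_k}$, where $n_k = \frac{1}{p}\bigl(1 + \frac{(-1)^{k+1}}{(p-1)^k}\bigr)$ (with $n_{-1} = 1$). -/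
open Finset

instance : Fact (0 < 2 * Real.pi) := ⟨by positivity⟩

/-- The closed-form ALM exponents `n_k = (1/p)(1 + (-1)^{k+1}/(p-1)^k)`. -/
noncomputable def almExp (p : ℕ) (k : ℕ) : ℝ :=
  (1 / (p : ℝ)) * (1 + (-1 : ℝ) ^ (k + 1) / ((p : ℝ) - 1) ^ k)

/-- The shifted exponent `n_{k-1}`, with `n_{-1} = 1`. -/
noncomputable def almExpPrev (p : ℕ) (k : ℕ) : ℝ :=
  if k = 0 then 1 else almExp p (k - 1)

lemma almExp_zero (p : ℕ) : almExp p 0 = 0 := by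
  simp [almExp]

lemma almExpPrev_zero (p : ℕ) : almExpPrev p 0 = 1 := rfl

lemma almExpPrev_succ (p k : ℕ) : almExpPrev p (k + 1) = almExp p k := by
  simp [almExpPrev]

lemma almExp_nonneg (p k : ℕ) (hp : 2 ≤ p) : 0 ≤ almExp p k := by
  have hp1 : (1 : ℝ) ≤ (p : ℝ) - 1 := by
    have : (2 : ℝ) ≤ (p : ℝ) := by exact_mod_cast hp
    linarith
  have hq : (1 : ℝ) ≤ ((p : ℝ) - 1) ^ k := one_le_pow₀ hp1
  have habs : |(-1 : ℝ) ^ (k + 1) / ((p : ℝ) - 1) ^ k| ≤ 1 := by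
    rw [abs_div, abs_pow, abs_neg, abs_one, one_pow, abs_of_nonneg (by linarith)]
    rw [div_le_one (by linarith)]
    linarith
  have h1 : (-1 : ℝ) ≤ (-1 : ℝ) ^ (k + 1) / ((p : ℝ) - 1) ^ k := neg_le_of_abs_le habs
  have hp0 : (0 : ℝ) ≤ 1 / (p : ℝ) := by positivity
  have : (0 : ℝ) ≤ 1 + (-1 : ℝ) ^ (k + 1) / ((p : ℝ) - 1) ^ k := by linarith
  exact mul_nonneg hp0 this

lemma almExpPrev_nonneg (p k : ℕ) (hp : 2 ≤ p) : 0 ≤ almExpPrev p k := by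
  unfold almExpPrev
  split
  · norm_num
  · exact almExp_nonneg p _ hp

/-- The exponent recurrence: `(n_{k-1} + (p-2) n_k)/(p-1) = n_{k+1}`. -/
lemma almExp_rec (p k : ℕ) (hp : 2 ≤ p) :
    (almExpPrev p k + ((p : ℝ) - 2) * almExp p k) * ((p : ℝ) - 1)⁻¹
      = almExp p (k + 1) := by
  have hp2 : (2 : ℝ) ≤ (p : ℝ) := by exact_mod_cast hp
  have hq : ((p : ℝ) - 1) ≠ 0 := by linarith
  have hqk : ((p : ℝ) - 1) ^ k ≠ 0 := pow_ne_zero _ hq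
  have hp0 : (p : ℝ) ≠ 0 := by linarith
  cases k with
  | zero =>
    simp only [almExpPrev, almExp, if_pos rfl, ↓reduceIte]
    field_simp
    ring
  | succ m =>
    simp only [almExpPrev, Nat.succ_ne_zero, if_neg, Nat.add_sub_cancel, almExp, ↓reduceIte]
    have hqm : ((p : ℝ) - 1) ^ m ≠ 0 := pow_ne_zero _ hq
    field_simp
    ring

/-- Rearrangement of the double product. -/
lemma key_prod {p : ℕ} (hp : 2 ≤ p) (i : Fin p) (x : Fin p → ℝ) (hx : ∀ j, 0 ≤ x j)
    (b c : ℝ) (hb : 0 ≤ b) (hc : 0 ≤ c) :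
    ∏ j ∈ Finset.univ.erase i, (x j ^ b * ∏ l ∈ Finset.univ.erase j, x l ^ c)
      = (x i ^ c) ^ (p - 1) * ∏ m ∈ Finset.univ.erase i, x m ^ (b + ((p : ℝ) - 2) * c) := by
  rw [Finset.prod_mul_distrib]
  have hswap : (∏ j ∈ Finset.univ.erase i, ∏ l ∈ Finset.univ.erase j, x l ^ c)
      = ∏ l ∈ (Finset.univ : Finset (Fin p)),
          ∏ j ∈ (Finset.univ.erase i).erase l, x l ^ c := by
    refine Finset.prod_comm' ?_
    intro j l
    simp only [Finset.mem_erase, Finset.mem_univ, and_true]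
    tauto
  rw [hswap]
  have hcard : ∀ l : Fin p, ((Finset.univ.erase i).erase l).card
      = if l = i then p - 1 else p - 2 := by
    intro l
    by_cases h : l = i
    · subst h
      rw [Finset.erase_idem, Finset.card_erase_of_mem (Finset.mem_univ _),
        Finset.card_univ, Fintype.card_fin]
      simp
    · rw [Finset.card_erase_of_mem (Finset.mem_erase.mpr ⟨h, Finset.mem_univ _⟩),
        Finset.card_erase_of_mem (Finset.mem_univ _), Finset.card_univ, Fintype.card_fin]
      rw [if_neg h]
      omega
  have hinner : ∀ l : Fin p, (∏ j ∈ (Finset.univ.erase i).erase l, x l ^ c)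
      = (x l ^ c) ^ (if l = i then p - 1 else p - 2) := by
    intro l
    rw [Finset.prod_const, hcard]
  rw [Finset.prod_congr rfl fun l _ => hinner l]
  rw [← Finset.mul_prod_erase Finset.univ _ (Finset.mem_univ i), if_pos rfl]
  rw [mul_left_comm, ← Finset.prod_mul_distrib]
  congr 1
  refine Finset.prod_congr rfl ?_
  intro m hm
  rw [if_neg (Finset.mem_erase.mp hm).1]
  have hp2 : (2 : ℝ) ≤ (p : ℝ) := by exact_mod_cast hp
  have hpm : (x m ^ c) ^ (p - 2) = x m ^ (((p : ℝ) - 2) * c) := by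
    rw [← Real.rpow_natCast (x m ^ c) (p - 2), ← Real.rpow_mul (hx m)]
    congr 1
    rw [Nat.cast_sub hp]
    push_cast
    ring
  rw [hpm, ← Real.rpow_add_of_nonneg (hx m) hb (mul_nonneg (by linarith) hc)]

/-- For continuous nonnegative symbols `a_1, …, a_p` on the circle, the ALM scalar iteration
`a_i^{(k+1)} = (∏_{j ≠ i} a_j^{(k)})^{1/(p-1)}` satisfies
`a_i^{(k)} = a_i^{n_{k-1}} ∏_{j ≠ i} a_j^{n_k}` with `n_k = (1/p)(1 + (-1)^{k+1}/(p-1)^k)`. -/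
theorem alm_scalar_closed_form (p : ℕ) (hp : 2 ≤ p)
    (a : Fin p → AddCircle (2 * Real.pi) → ℝ)
    (hcont : ∀ i, Continuous (a i)) (hnonneg : ∀ i t, 0 ≤ a i t)
    (A : ℕ → Fin p → AddCircle (2 * Real.pi) → ℝ)
    (hinit : ∀ i, A 0 i = a i)
    (hiter : ∀ k i t,
      A (k + 1) i t = (∏ j ∈ Finset.univ.erase i, A k j t) ^ (((p : ℝ) - 1)⁻¹)) :
    ∀ k i t, A k i t =
      a i t ^ almExpPrev p k * ∏ j ∈ Finset.univ.erase i, a j t ^ almExp p k := by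
  intro k
  induction k with
  | zero =>
    intro i t
    rw [hinit, almExpPrev_zero, almExp_zero]
    simp
  | succ k ih =>
    intro i t
    rw [hiter]
    rw [Finset.prod_congr rfl (fun j _ => ih j t)]
    have hb : 0 ≤ almExpPrev p k := almExpPrev_nonneg p k hp
    have hc : 0 ≤ almExp p k := almExp_nonneg p k hp
    have hx : ∀ j, 0 ≤ a j t := fun j => hnonneg j t
    rw [key_prod hp i (fun j => a j t) hx _ _ hb hc]
    have hp2 : (2 : ℝ) ≤ (p : ℝ) := by exact_mod_cast hp
    have hq1 : ((p - 1 : ℕ) : ℝ) = (p : ℝ) - 1 := by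
      rw [Nat.cast_sub (by omega)]; norm_num
    have h1 : ((a i t ^ almExp p k) ^ (p - 1) : ℝ) ^ (((p : ℝ) - 1)⁻¹)
        = a i t ^ almExp p k := by
      rw [← Real.rpow_natCast (a i t ^ almExp p k) (p - 1),
        ← Real.rpow_mul (Real.rpow_nonneg (hx i) _), hq1,
        mul_inv_cancel₀ (by linarith), Real.rpow_one]
    rw [Real.mul_rpow (pow_nonneg (Real.rpow_nonneg (hx i) _) _)
        (Finset.prod_nonneg fun m _ => Real.rpow_nonneg (hx m) _), h1,
      ← Real.finset_prod_rpow _ _ (fun m _ => Real.rpow_nonneg (hx m) _)]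
    rw [almExpPrev_succ]
    congr 1
    refine Finset.prod_congr rfl fun m _ => ?_
    rw [← Real.rpow_mul (hx m), almExp_rec p k hp]
end

section
/- Let $p \ge 2$ be an integer. For $x \in [0,1]$, define $m_0(x) = x$ and $m_{k+1}(x) = \bigl(\frac{p-1+m_k(x)}{p}\bigr)^{-p} m_k(x)$. Then for all $k$ and all $x \in [0,1]$: $0 \le m_k(x) \le m_{k+1}(x) \le 1$, with strict inequalities when $x \notin \{0,1\}$. -/
open Set

/-- The residual sequence in the coupled Newton iteration for the `p`-th root:
`m_0(x) = x`, `m_{k+1}(x) = ((p-1+m_k(x))/p)^{-p} m_k(x)`. -/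
noncomputable def pthRootResidual (p : ℕ) : ℕ → ℝ → ℝ
  | 0 => fun x => x
  | (k + 1) => fun x =>
      pthRootResidual p k x / (((p : ℝ) - 1 + pthRootResidual p k x) / p) ^ p

/-- Strict Bernoulli inequality for negative `x` and exponent `≥ 2`. -/
lemma bernoulli_strict {x : ℝ} (hx1 : -1 < x) (hx0 : x < 0) :
    ∀ n : ℕ, 2 ≤ n → 1 + (n : ℝ) * x < (1 + x) ^ n := by
  intro n hn
  induction n with
  | zero => omega
  | succ m ih =>
    rcases Nat.lt_or_ge m 2 with hm | hm
    · interval_cases m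
      · omega
      · have hx : x ≠ 0 := ne_of_lt hx0
        have : 0 < x ^ 2 := by positivity
        push_cast
        nlinarith
    · have h := ih hm
      have h1x : 0 < 1 + x := by linarith
      have h2 : (1 + (m : ℝ) * x) * (1 + x) < (1 + x) ^ m * (1 + x) :=
        mul_lt_mul_of_pos_right h h1x
      have hm0 : (0 : ℝ) < m := by exact_mod_cast Nat.lt_of_lt_of_le (by norm_num) hm
      have hxne : x ≠ 0 := ne_of_lt hx0
      have hx2 : 0 < x ^ 2 := by positivity
      have : 1 + ((m : ℝ) + 1) * x ≤ (1 + (m : ℝ) * x) * (1 + x) := by nlinarith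
      calc 1 + ((m + 1 : ℕ) : ℝ) * x = 1 + ((m : ℝ) + 1) * x := by push_cast; ring
        _ ≤ (1 + (m : ℝ) * x) * (1 + x) := this
        _ < (1 + x) ^ m * (1 + x) := h2
        _ = (1 + x) ^ (m + 1) := by ring

/-- Key step facts about `f t = t / ((p-1+t)/p)^p`. -/
lemma pth_step (p : ℕ) (hp : 2 ≤ p) {t : ℝ} (ht0 : 0 ≤ t) (ht1 : t ≤ 1) :
    0 ≤ t / (((p : ℝ) - 1 + t) / p) ^ p ∧
    t ≤ t / (((p : ℝ) - 1 + t) / p) ^ p ∧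
    t / (((p : ℝ) - 1 + t) / p) ^ p ≤ 1 := by
  have hpR : (2 : ℝ) ≤ p := by exact_mod_cast hp
  have hp0 : (0 : ℝ) < p := by linarith
  set b : ℝ := ((p : ℝ) - 1 + t) / p with hb
  have hb0 : 0 < b := by
    apply div_pos; linarith; exact hp0
  have hb1 : b ≤ 1 := by
    rw [hb, div_le_one hp0]; linarith
  have hbp0 : 0 < b ^ p := pow_pos hb0 p
  have hbp1 : b ^ p ≤ 1 := pow_le_one₀ hb0.le hb1
  -- Bernoulli: b^p ≥ t
  have hbern : t ≤ b ^ p := by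
    have hx : b = 1 + (-(1 - t) / p) := by rw [hb]; field_simp <;> ring
    have h1 : -1 ≤ -(1 - t) / p := by
      rw [le_div_iff₀ hp0]; nlinarith
    have := one_add_mul_le_pow (a := -(1 - t) / p) (by linarith) p
    rw [← hx] at this
    have heq : 1 + (p : ℝ) * (-(1 - t) / p) = t := by field_simp; ring
    linarith [heq ▸ this]
  refine ⟨div_nonneg ht0 hbp0.le, ?_, ?_⟩
  · rw [le_div_iff₀ hbp0]
    nlinarith
  · rw [div_le_one hbp0]; exact hbern

lemma pth_step_strict (p : ℕ) (hp : 2 ≤ p) {t : ℝ} (ht0 : 0 < t) (ht1 : t < 1) :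
    0 < t / (((p : ℝ) - 1 + t) / p) ^ p ∧
    t < t / (((p : ℝ) - 1 + t) / p) ^ p ∧
    t / (((p : ℝ) - 1 + t) / p) ^ p < 1 := by
  have hpR : (2 : ℝ) ≤ p := by exact_mod_cast hp
  have hp0 : (0 : ℝ) < p := by linarith
  set b : ℝ := ((p : ℝ) - 1 + t) / p with hb
  have hb0 : 0 < b := by
    apply div_pos; linarith; exact hp0
  have hb1 : b < 1 := by
    rw [hb, div_lt_one hp0]; linarith
  have hbp0 : 0 < b ^ p := pow_pos hb0 p
  have hbp1 : b ^ p < 1 := pow_lt_one₀ hb0.le hb1 (by omega)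
  have hbern : t < b ^ p := by
    have hx : b = 1 + (-(1 - t) / p) := by rw [hb]; field_simp <;> ring
    have h1 : -1 < -(1 - t) / p := by
      rw [lt_div_iff₀ hp0]; nlinarith
    have h2 : -(1 - t) / p < 0 := by
      apply div_neg_of_neg_of_pos; linarith; exact hp0
    have := bernoulli_strict h1 h2 p hp
    rw [← hx] at this
    have heq : 1 + (p : ℝ) * (-(1 - t) / p) = t := by field_simp; ring
    linarith [heq ▸ this]
  refine ⟨div_pos ht0 hbp0, ?_, ?_⟩
  · rw [lt_div_iff₀ hbp0]; nlinarith
  · rw [div_lt_one hbp0]; exact hbern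

/-- For `p ≥ 2` and `x ∈ [0,1]`: `0 ≤ m_k(x) ≤ m_{k+1}(x) ≤ 1` for all `k`, with strict
inequalities when `x ∉ {0, 1}`. -/
theorem pthRootResidual_monotone (p : ℕ) (hp : 2 ≤ p) :
    (∀ x ∈ Icc (0 : ℝ) 1, ∀ k : ℕ,
        0 ≤ pthRootResidual p k x ∧
          pthRootResidual p k x ≤ pthRootResidual p (k + 1) x ∧
          pthRootResidual p (k + 1) x ≤ 1) ∧
      (∀ x ∈ Ioo (0 : ℝ) 1, ∀ k : ℕ,
        0 < pthRootResidual p k x ∧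
          pthRootResidual p k x < pthRootResidual p (k + 1) x ∧
          pthRootResidual p (k + 1) x < 1) := by
  constructor
  · intro x hx k
    induction k with
    | zero =>
      have h := pth_step p hp hx.1 hx.2
      exact ⟨hx.1, h.2.1, h.2.2⟩
    | succ m ih =>
      have h0 : 0 ≤ pthRootResidual p (m + 1) x := le_trans ih.1 ih.2.1
      have h := pth_step p hp h0 ih.2.2
      exact ⟨h0, h.2.1, h.2.2⟩
  · intro x hx k
    induction k with
    | zero =>
      have h := pth_step_strict p hp hx.1 hx.2
      exact ⟨hx.1, h.2.1, h.2.2⟩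
    | succ m ih =>
      have h0 : 0 < pthRootResidual p (m + 1) x := lt_trans ih.1 ih.2.1
      have h := pth_step_strict p hp h0 ih.2.2
      exact ⟨h0, h.2.1, h.2.2⟩
end
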